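/- arXiv:1606.04933 — 2 statements merged into one kernel-verified Lean document; each statement's English description precedes it below -/
import Mathlib

section
/- With the same setup (h = α₁ h₀ + h̃, x = α₂ x₀ + x̃, ‖h₀‖ = ‖x₀‖ = √d₀, δ = ‖h x* − h₀ x₀*‖_F/d₀ < 1), the product of perturbation norms satisfies ‖h̃‖ · ‖x̃‖ ≤ δ²/(2(1−δ)) · d₀. -/
open scoped BigOperators
open Complex

noncomputable def frob {K N : ℕ} (M : Matrix (Fin K) (Fin N) ℂ) : ℝ :=
  Real.sqrt (∑ i, ∑ j, ‖M i j‖ ^ 2)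

noncomputable def outer {K N : ℕ} (h : EuclideanSpace ℂ (Fin K))
    (x : EuclideanSpace ℂ (Fin N)) : Matrix (Fin K) (Fin N) ℂ :=
  Matrix.of fun i j => h i * star (x j)

lemma sum_norm_sq_eq {K : ℕ} (h : EuclideanSpace ℂ (Fin K)) :
    ∑ i, Complex.normSq (h i) = ‖h‖ ^ 2 := by
  rw [EuclideanSpace.norm_eq, Real.sq_sqrt (by positivity)]
  simp [Complex.sq_norm]

lemma frob_sq {K N : ℕ} (h h₀ : EuclideanSpace ℂ (Fin K)) (x x₀ : EuclideanSpace ℂ (Fin N)) :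
    ∑ i, ∑ j, ‖(outer h x - outer h₀ x₀) i j‖ ^ 2
    = ‖h‖^2 * ‖x‖^2 + ‖h₀‖^2 * ‖x₀‖^2
      - 2 * ((inner ℂ h₀ h : ℂ) * (starRingEnd ℂ) ((inner ℂ x₀ x : ℂ))).re := by
  have e : ∀ (i : Fin K) (j : Fin N), ‖(outer h x - outer h₀ x₀) i j‖ ^ 2
      = Complex.normSq (h i) * Complex.normSq (x j)
        + Complex.normSq (h₀ i) * Complex.normSq (x₀ j)
        - 2 * (((starRingEnd ℂ) (h₀ i) * h i) * ((starRingEnd ℂ) (x j) * x₀ j)).re := by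
    intro i j
    have : (outer h x - outer h₀ x₀) i j = h i * (starRingEnd ℂ) (x j) - h₀ i * (starRingEnd ℂ) (x₀ j) := by
      simp [outer, Matrix.sub_apply]
    rw [this, Complex.sq_norm, Complex.normSq_sub]
    have hc : (h i * (starRingEnd ℂ) (x j)) * (starRingEnd ℂ) (h₀ i * (starRingEnd ℂ) (x₀ j))
        = ((starRingEnd ℂ) (h₀ i) * h i) * ((starRingEnd ℂ) (x j) * x₀ j) := by
      simp [map_mul]; ring
    rw [hc, Complex.normSq_mul, Complex.normSq_mul, Complex.normSq_conj, Complex.normSq_conj]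
  have s1 : ∑ i, ∑ j, Complex.normSq (h i) * Complex.normSq (x j)
      = (∑ i, Complex.normSq (h i)) * (∑ j, Complex.normSq (x j)) :=
    (Fintype.sum_mul_sum _ _).symm
  have s2 : ∑ i, ∑ j, Complex.normSq (h₀ i) * Complex.normSq (x₀ j)
      = (∑ i, Complex.normSq (h₀ i)) * (∑ j, Complex.normSq (x₀ j)) :=
    (Fintype.sum_mul_sum _ _).symm
  have s3 : ∑ i, ∑ j, (((starRingEnd ℂ) (h₀ i) * h i) * ((starRingEnd ℂ) (x j) * x₀ j)).re
      = ((inner ℂ h₀ h : ℂ) * (starRingEnd ℂ) ((inner ℂ x₀ x : ℂ))).re := by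
    have hz : (∑ i, ∑ j, ((starRingEnd ℂ) (h₀ i) * h i) * ((starRingEnd ℂ) (x j) * x₀ j))
        = (inner ℂ h₀ h : ℂ) * (starRingEnd ℂ) ((inner ℂ x₀ x : ℂ)) := by
      rw [← Fintype.sum_mul_sum]
      have g1 : (∑ i, (starRingEnd ℂ) (h₀ i) * h i) = (inner ℂ h₀ h : ℂ) := by
        simp [PiLp.inner_apply, RCLike.inner_apply, mul_comm]
      have g2 : (∑ j, (starRingEnd ℂ) (x j) * x₀ j) = (starRingEnd ℂ) ((inner ℂ x₀ x : ℂ)) := by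
        rw [inner_conj_symm]
        simp [PiLp.inner_apply, RCLike.inner_apply, mul_comm]
      rw [g1, g2]
    rw [← hz]
    simp [Complex.re_sum]
  simp only [e, Finset.sum_sub_distrib, Finset.sum_add_distrib, ← Finset.mul_sum]
  rw [← Finset.sum_mul, ← Finset.sum_mul, sum_norm_sq_eq, sum_norm_sq_eq, sum_norm_sq_eq,
    sum_norm_sq_eq, s3]

set_option maxHeartbeats 2000000 in
theorem stmt2 {K N : ℕ} (d₀ : ℝ) (hd₀ : 0 < d₀)
    (h₀ h : EuclideanSpace ℂ (Fin K)) (x₀ x : EuclideanSpace ℂ (Fin N))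
    (hh₀ : ‖h₀‖ = Real.sqrt d₀) (hx₀ : ‖x₀‖ = Real.sqrt d₀)
    (α₁ α₂ : ℂ) (hα₁ : α₁ = (inner ℂ h₀ h : ℂ) / (d₀ : ℂ))
    (hα₂ : α₂ = (inner ℂ x₀ x : ℂ) / (d₀ : ℂ))
    (δ : ℝ) (hδ : δ = frob (outer h x - outer h₀ x₀) / d₀)
    (hδ1 : δ < 1) :
    ‖h - α₁ • h₀‖ * ‖x - α₂ • x₀‖ ≤ δ ^ 2 / (2 * (1 - δ)) * d₀ := by
  have hd₀' : (d₀ : ℂ) ≠ 0 := by exact_mod_cast hd₀.ne'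
  have hnh₀ : ‖h₀‖ ^ 2 = d₀ := by rw [hh₀, Real.sq_sqrt hd₀.le]
  have hnx₀ : ‖x₀‖ ^ 2 = d₀ := by rw [hx₀, Real.sq_sqrt hd₀.le]
  have hih : (inner ℂ h₀ h : ℂ) = α₁ * d₀ := by rw [hα₁, div_mul_cancel₀ _ hd₀']
  have hix : (inner ℂ x₀ x : ℂ) = α₂ * d₀ := by rw [hα₂, div_mul_cancel₀ _ hd₀']
  have hih₀ : (inner ℂ h₀ h₀ : ℂ) = (d₀ : ℂ) := by
    rw [inner_self_eq_norm_sq_to_K]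
    norm_cast
    rw [hnh₀]
    first | rfl | norm_num | simp
  have hix₀ : (inner ℂ x₀ x₀ : ℂ) = (d₀ : ℂ) := by
    rw [inner_self_eq_norm_sq_to_K]
    norm_cast
    rw [hnx₀]
    first | rfl | norm_num | simp
  set H := ‖h - α₁ • h₀‖ with hH
  set X := ‖x - α₂ • x₀‖ with hX
  have hH0 : 0 ≤ H := norm_nonneg _
  have hX0 : 0 ≤ X := norm_nonneg _
  have o1 : (inner ℂ (α₁ • h₀) (h - α₁ • h₀) : ℂ) = 0 := by
    simp only [inner_sub_right, inner_smul_left, inner_smul_right, hih, hih₀]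
    ring
  have o2 : (inner ℂ (α₂ • x₀) (x - α₂ • x₀) : ℂ) = 0 := by
    simp only [inner_sub_right, inner_smul_left, inner_smul_right, hix, hix₀]
    ring
  have ph : ‖h‖ ^ 2 = Complex.normSq α₁ * d₀ + H ^ 2 := by
    have hdecomp : h = α₁ • h₀ + (h - α₁ • h₀) := by abel
    calc ‖h‖ ^ 2 = ‖α₁ • h₀ + (h - α₁ • h₀)‖ ^ 2 := by rw [← hdecomp]
      _ = ‖α₁ • h₀‖ ^ 2 + H ^ 2 := by
        have := norm_add_sq_eq_norm_sq_add_norm_sq_of_inner_eq_zero _ _ o1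
        rw [sq, sq, sq]; exact this
      _ = Complex.normSq α₁ * d₀ + H ^ 2 := by
        rw [norm_smul, mul_pow, hnh₀, ← Complex.sq_norm]
  have px : ‖x‖ ^ 2 = Complex.normSq α₂ * d₀ + X ^ 2 := by
    have hdecomp : x = α₂ • x₀ + (x - α₂ • x₀) := by abel
    calc ‖x‖ ^ 2 = ‖α₂ • x₀ + (x - α₂ • x₀)‖ ^ 2 := by rw [← hdecomp]
      _ = ‖α₂ • x₀‖ ^ 2 + X ^ 2 := by
        have := norm_add_sq_eq_norm_sq_add_norm_sq_of_inner_eq_zero _ _ o2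
        rw [sq, sq, sq]; exact this
      _ = Complex.normSq α₂ * d₀ + X ^ 2 := by
        rw [norm_smul, mul_pow, hnx₀, ← Complex.sq_norm]
  have hfrob : frob (outer h x - outer h₀ x₀) = δ * d₀ := by
    rw [hδ, div_mul_cancel₀ _ hd₀.ne']
  have hS : (δ * d₀) ^ 2 = ∑ i, ∑ j, ‖(outer h x - outer h₀ x₀) i j‖ ^ 2 := by
    rw [← hfrob, frob, Real.sq_sqrt (by positivity)]
  rw [frob_sq, hih, hix, ph, px, hnh₀, hnx₀] at hS
  have hre : ((α₁ * ↑d₀) * (starRingEnd ℂ) (α₂ * ↑d₀)).re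
      = (α₁ * (starRingEnd ℂ) α₂).re * d₀ ^ 2 := by
    have hz : (α₁ * ↑d₀) * (starRingEnd ℂ) (α₂ * ↑d₀)
        = (((d₀ : ℝ) ^ 2 : ℝ) : ℂ) * (α₁ * (starRingEnd ℂ) α₂) := by
      rw [map_mul, Complex.conj_ofReal]; push_cast; ring
    rw [hz, Complex.re_ofReal_mul]; ring
  rw [hre] at hS
  set c := ‖(α₁ * (starRingEnd ℂ) α₂ - 1)‖ with hc
  have hcsq : c ^ 2 = Complex.normSq α₁ * Complex.normSq α₂
      - 2 * (α₁ * (starRingEnd ℂ) α₂).re + 1 := by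
    rw [hc, Complex.sq_norm, Complex.normSq_sub, Complex.normSq_mul, Complex.normSq_conj]
    simp [Complex.mul_re]
    ring
  have key : δ ^ 2 * d₀ ^ 2 = c ^ 2 * d₀ ^ 2 + Complex.normSq α₂ * H ^ 2 * d₀
      + Complex.normSq α₁ * X ^ 2 * d₀ + H ^ 2 * X ^ 2 := by
    rw [hcsq, show δ ^ 2 * d₀ ^ 2 = (δ * d₀) ^ 2 by ring, hS]; ring
  have hδ0 : 0 ≤ δ := by
    rw [hδ]; exact div_nonneg (Real.sqrt_nonneg _) hd₀.le
  have hc0 : 0 ≤ c := norm_nonneg _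
  have hcd : c ≤ δ := by
    have h1 : c ^ 2 * d₀ ^ 2 ≤ δ ^ 2 * d₀ ^ 2 := by
      nlinarith [mul_nonneg (mul_nonneg (Complex.normSq_nonneg α₂) (sq_nonneg H)) hd₀.le,
        mul_nonneg (mul_nonneg (Complex.normSq_nonneg α₁) (sq_nonneg X)) hd₀.le,
        mul_nonneg (sq_nonneg H) (sq_nonneg X)]
    have h2 : c ^ 2 ≤ δ ^ 2 :=
      le_of_mul_le_mul_right h1 (by positivity)
    nlinarith [h2, hc0, hδ0]
  set a := ‖α₁‖ with ha
  set b := ‖α₂‖ with hb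
  have hab : 1 - δ ≤ a * b := by
    have h1 : ‖(1:ℂ)‖ - ‖(1:ℂ) - (α₁ * (starRingEnd ℂ) α₂)‖ ≤ ‖α₁ * (starRingEnd ℂ) α₂‖ := by
      have := norm_sub_norm_le (1:ℂ) (1 - α₁ * (starRingEnd ℂ) α₂)
      simpa using this
    have h2 : ‖(1:ℂ) - (α₁ * (starRingEnd ℂ) α₂)‖ = c := by
      rw [hc, ← norm_neg]; congr 1; ring
    have h3 : ‖α₁ * (starRingEnd ℂ) α₂‖ = a * b := by
      rw [norm_mul, ha, hb]
      simp
    rw [h2, h3] at h1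
    simp at h1
    linarith
  have hna : Complex.normSq α₁ = a ^ 2 := (Complex.sq_norm α₁).symm
  have hnb : Complex.normSq α₂ = b ^ 2 := (Complex.sq_norm α₂).symm
  rw [hna, hnb] at key
  have ha0 : 0 ≤ a := norm_nonneg _
  have hb0 : 0 ≤ b := norm_nonneg _
  have t2 : b ^ 2 * H ^ 2 + a ^ 2 * X ^ 2 ≤ δ ^ 2 * d₀ := by
    have h4 : (b ^ 2 * H ^ 2 + a ^ 2 * X ^ 2) * d₀ ≤ (δ ^ 2 * d₀) * d₀ := by
      nlinarith [mul_nonneg (mul_nonneg hc0 hc0) (sq_nonneg d₀),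
        mul_nonneg (sq_nonneg H) (sq_nonneg X), sq_nonneg c]
    exact le_of_mul_le_mul_right h4 hd₀
  have t1 : 2 * (a * b) * (H * X) ≤ b ^ 2 * H ^ 2 + a ^ 2 * X ^ 2 := by
    nlinarith [sq_nonneg (b * H - a * X)]
  have t3 : 2 * (1 - δ) * (H * X) ≤ 2 * (a * b) * (H * X) := by
    have hHX : 0 ≤ H * X := mul_nonneg hH0 hX0
    nlinarith
  have hfin : 2 * (1 - δ) * (H * X) ≤ δ ^ 2 * d₀ := by linarith
  rw [div_mul_eq_mul_div, le_div_iff₀ (by linarith : (0:ℝ) < 2 * (1 - δ))]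
  nlinarith [hfin]
end

section
/- Let d₀ > 0 and d, ρ real with (9/10) d₀ ≤ d ≤ (11/10) d₀ and ρ ≥ d². Suppose (h, x) ∈ ℂ^K × ℂ^N is such that at least one of the quantities ‖h‖²/(2d), ‖x‖²/(2d), or L|b_l* h|²/(8dμ²) (for some l) exceeds 2d₀/d. Then with G(h,x) := ρ[G₀(‖h‖²/(2d)) + G₀(‖x‖²/(2d)) + Σ_{l=1}^L G₀(L|b_l*h|²/(8dμ²))] and G₀(z) = max{z−1,0}², one has G(h, x) ≥ ρ (2d₀/d − 1)² ≥ (2d₀ − d)² ≥ 0.81 d₀². -/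
open scoped BigOperators

theorem stmt8 {K N L : ℕ} (d₀ d ρ μ : ℝ) (hd₀ : 0 < d₀)
    (hdl : 9 / 10 * d₀ ≤ d) (hdu : d ≤ 11 / 10 * d₀) (hρ : d ^ 2 ≤ ρ) (hμ : 0 < μ)
    (b : Fin L → EuclideanSpace ℂ (Fin K))
    (h : EuclideanSpace ℂ (Fin K)) (x : EuclideanSpace ℂ (Fin N))
    (hexc : ‖h‖ ^ 2 / (2 * d) > 2 * d₀ / d ∨ ‖x‖ ^ 2 / (2 * d) > 2 * d₀ / d ∨
      ∃ l, (L : ℝ) * ‖(inner ℂ (b l) h : ℂ)‖ ^ 2 / (8 * d * μ ^ 2) > 2 * d₀ / d) :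
    ρ * (max (‖h‖ ^ 2 / (2 * d) - 1) 0 ^ 2 + max (‖x‖ ^ 2 / (2 * d) - 1) 0 ^ 2
        + ∑ l, max ((L : ℝ) * ‖(inner ℂ (b l) h : ℂ)‖ ^ 2 / (8 * d * μ ^ 2) - 1) 0 ^ 2)
      ≥ ρ * (2 * d₀ / d - 1) ^ 2 ∧
    ρ * (2 * d₀ / d - 1) ^ 2 ≥ (2 * d₀ - d) ^ 2 ∧
    (2 * d₀ - d) ^ 2 ≥ 0.81 * d₀ ^ 2 := by
  have hd : 0 < d := lt_of_lt_of_le (by nlinarith) hdl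
  have hρ0 : 0 ≤ ρ := le_trans (by positivity) hρ
  have hgt1 : 1 < 2 * d₀ / d := by
    rw [lt_div_iff₀ hd]; nlinarith
  -- key: one summand exceeds the bound
  have key : ∀ z : ℝ, z > 2 * d₀ / d → (2 * d₀ / d - 1) ^ 2 ≤ max (z - 1) 0 ^ 2 := by
    intro z hz
    have h1 : 2 * d₀ / d - 1 ≤ max (z - 1) 0 := le_max_of_le_left (by linarith)
    have h2 : 0 ≤ 2 * d₀ / d - 1 := by linarith
    nlinarith [le_max_right (z - 1) (0:ℝ)]
  have hsum : 0 ≤ ∑ l, max ((L : ℝ) * ‖(inner ℂ (b l) h : ℂ)‖ ^ 2 / (8 * d * μ ^ 2) - 1) 0 ^ 2 :=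
    Finset.sum_nonneg fun l _ => by positivity
  have part1 : (2 * d₀ / d - 1) ^ 2 ≤
      max (‖h‖ ^ 2 / (2 * d) - 1) 0 ^ 2 + max (‖x‖ ^ 2 / (2 * d) - 1) 0 ^ 2
        + ∑ l, max ((L : ℝ) * ‖(inner ℂ (b l) h : ℂ)‖ ^ 2 / (8 * d * μ ^ 2) - 1) 0 ^ 2 := by
    rcases hexc with hc | hc | ⟨l, hc⟩
    · have := key _ hc
      have h2 : (0:ℝ) ≤ max (‖x‖ ^ 2 / (2 * d) - 1) 0 ^ 2 := by positivity
      linarith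
    · have := key _ hc
      have h2 : (0:ℝ) ≤ max (‖h‖ ^ 2 / (2 * d) - 1) 0 ^ 2 := by positivity
      linarith
    · have := key _ hc
      have hle : max ((L : ℝ) * ‖(inner ℂ (b l) h : ℂ)‖ ^ 2 / (8 * d * μ ^ 2) - 1) 0 ^ 2 ≤
          ∑ l', max ((L : ℝ) * ‖(inner ℂ (b l') h : ℂ)‖ ^ 2 / (8 * d * μ ^ 2) - 1) 0 ^ 2 :=
        Finset.single_le_sum (f := fun l' => max ((L : ℝ) * ‖(inner ℂ (b l') h : ℂ)‖ ^ 2 / (8 * d * μ ^ 2) - 1) 0 ^ 2) (fun l' _ => by positivity) (Finset.mem_univ l)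
      have h2 : (0:ℝ) ≤ max (‖h‖ ^ 2 / (2 * d) - 1) 0 ^ 2 := by positivity
      have h3 : (0:ℝ) ≤ max (‖x‖ ^ 2 / (2 * d) - 1) 0 ^ 2 := by positivity
      linarith
  refine ⟨mul_le_mul_of_nonneg_left part1 hρ0, ?_, by nlinarith⟩
  have heq : 2 * d₀ / d - 1 = (2 * d₀ - d) / d := by field_simp
  rw [heq, ge_iff_le]
  have e2 : d ^ 2 * ((2 * d₀ - d) / d) ^ 2 = (2 * d₀ - d) ^ 2 := by field_simp
  nlinarith [mul_le_mul_of_nonneg_right hρ (sq_nonneg ((2 * d₀ - d) / d))]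
end
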